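/- Let R = {(A|v) : A ∈ M_n(F_q), v ∈ F_q^n} with multiplication (A|v)(B|w) = (AB|Aw). Then J = {(0|v) : v ∈ F_q^n} is the Jacobson radical of R and is the only proper nonzero two-sided ideal of R; in particular R/J ≅ M_n(F_q). -/

import Mathlib

/-- Two-sided ideal of a (not necessarily unital) ring, as a set. -/
def IsTwoSidedIdealSet {R : Type*} [NonUnitalRing R] (I : Set R) : Prop :=
  0 ∈ I ∧ (∀ a ∈ I, ∀ b ∈ I, a + b ∈ I) ∧ (∀ a ∈ I, -a ∈ I) ∧
    (∀ (r : R), ∀ a ∈ I, r * a ∈ I) ∧ ∀ (r : R), ∀ a ∈ I, a * r ∈ I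

/-- The circle operation `a ∘ b = a + b - ab`. -/
def circOp {R : Type*} [NonUnitalRing R] (a b : R) : R := a + b - a * b

/-- `a` is left quasi-regular if it has a left inverse for `∘`. -/
def IsLeftQuasiRegular {R : Type*} [NonUnitalRing R] (a : R) : Prop :=
  ∃ b : R, circOp b a = 0

/-- The Jacobson radical of a not necessarily unital ring. -/
def jacobsonSet (R : Type*) [NonUnitalRing R] : Set R :=
  {a : R | ∀ r : R, IsLeftQuasiRegular (r * a)}

/-- The ring of `(n+1) × (n+1)` matrices over `F` whose last row is zero. -/
def lastRowZero (n : ℕ) (F : Type*) [Field F] :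
    NonUnitalSubring (Matrix (Fin (n + 1)) (Fin (n + 1)) F) where
  carrier := {M | ∀ j, M (Fin.last n) j = 0}
  zero_mem' := by intro j; simp
  add_mem' := by intro a b ha hb j; simp [Matrix.add_apply, ha j, hb j]
  neg_mem' := by intro a ha j; simp [Matrix.neg_apply, ha j]
  mul_mem' := by
    intro a b ha hb j
    simp only [Set.mem_setOf_eq] at ha ⊢
    simp [Matrix.mul_apply, ha]

/-- The top-left `n × n` block of an element `(A | v)` of the ring. -/
def topLeft {n : ℕ} {F : Type*} [Field F] (x : ↥(lastRowZero n F)) :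
    Matrix (Fin n) (Fin n) F :=
  Matrix.of fun i j =>
    (x : Matrix (Fin (n + 1)) (Fin (n + 1)) F) i.castSucc j.castSucc

namespace JacHelp
open Matrix
variable {F : Type*} [Field F] {n : ℕ}

def lastCol (x : ↥(lastRowZero n F)) : Fin n → F :=
  fun i => (x : Matrix (Fin (n+1)) (Fin (n+1)) F) i.castSucc (Fin.last n)

def mk (B : Matrix (Fin n) (Fin n) F) (v : Fin n → F) : ↥(lastRowZero n F) :=
  ⟨Matrix.of fun i j =>
    if hi : i = Fin.last n then 0
    else if hj : j = Fin.last n then v (i.castPred hi)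
    else B (i.castPred hi) (j.castPred hj),
   fun j => by simp⟩

@[simp] lemma last_row (x : ↥(lastRowZero n F)) (j : Fin (n+1)) :
    (x : Matrix (Fin (n+1)) (Fin (n+1)) F) (Fin.last n) j = 0 := x.2 j

@[simp] lemma topLeft_mk (B : Matrix (Fin n) (Fin n) F) (v : Fin n → F) :
    topLeft (mk B v) = B := by
  ext i j
  simp [topLeft, mk, (Fin.castSucc_lt_last _).ne]

@[simp] lemma lastCol_mk (B : Matrix (Fin n) (Fin n) F) (v : Fin n → F) :
    lastCol (mk B v) = v := by
  ext i
  simp [lastCol, mk, (Fin.castSucc_lt_last _).ne]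

lemma ext_tl (x y : ↥(lastRowZero n F)) (h1 : topLeft x = topLeft y)
    (h2 : lastCol x = lastCol y) : x = y := by
  apply Subtype.ext
  ext i j
  induction i using Fin.lastCases with
  | last => simp
  | cast i =>
    induction j using Fin.lastCases with
    | last => exact congrFun h2 i
    | cast j => exact congrFun (congrFun h1 i) j

@[simp] lemma topLeft_zero : topLeft (0 : ↥(lastRowZero n F)) = 0 := by
  ext i j; simp [topLeft]

@[simp] lemma lastCol_zero : lastCol (0 : ↥(lastRowZero n F)) = 0 := by
  ext i; simp [lastCol]

@[simp] lemma topLeft_add (x y : ↥(lastRowZero n F)) :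
    topLeft (x + y) = topLeft x + topLeft y := by
  ext i j; simp [topLeft]

@[simp] lemma lastCol_add (x y : ↥(lastRowZero n F)) :
    lastCol (x + y) = lastCol x + lastCol y := by
  ext i; simp [lastCol]

@[simp] lemma topLeft_neg (x : ↥(lastRowZero n F)) :
    topLeft (-x) = -topLeft x := by
  ext i j; simp [topLeft]

@[simp] lemma topLeft_sub (x y : ↥(lastRowZero n F)) :
    topLeft (x - y) = topLeft x - topLeft y := by
  ext i j; simp [topLeft, Matrix.sub_apply]

@[simp] lemma topLeft_mul (x y : ↥(lastRowZero n F)) :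
    topLeft (x * y) = topLeft x * topLeft y := by
  ext i j
  simp only [topLeft, Matrix.of_apply, NonUnitalSubring.val_mul, Matrix.mul_apply]
  rw [Fin.sum_univ_castSucc]
  simp

@[simp] lemma lastCol_mul (x y : ↥(lastRowZero n F)) :
    lastCol (x * y) = topLeft x *ᵥ lastCol y := by
  ext i
  simp only [lastCol, topLeft, NonUnitalSubring.val_mul, Matrix.mul_apply,
    Matrix.mulVec, dotProduct, Matrix.of_apply]
  rw [Fin.sum_univ_castSucc]
  simp

lemma mk_zero : (mk 0 0 : ↥(lastRowZero n F)) = 0 :=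
  ext_tl _ _ (by simp) (by simp)

lemma mk_eq (x : ↥(lastRowZero n F)) : x = mk (topLeft x) (lastCol x) :=
  ext_tl _ _ (by simp) (by simp)

lemma mul_eq_zero_of_topLeft (x y : ↥(lastRowZero n F)) (h : topLeft x = 0) :
    x * y = 0 :=
  ext_tl _ _ (by simp [h]) (by simp [h])

lemma tri (A : Matrix (Fin n) (Fin n) F) (i p q j : Fin n) (a c : F) :
    Matrix.single i p a * A * Matrix.single q j c
      = Matrix.single i j (a * A p q * c) := by
  ext r s
  by_cases hs : s = j
  · subst hs
    rw [Matrix.mul_single_apply_same]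
    by_cases hr : r = i
    · subst hr
      rw [Matrix.single_mul_apply_same, Matrix.single_apply_same]
    · rw [Matrix.single_mul_apply_of_ne _ _ _ _ _ hr,
        Matrix.single_apply_of_row_ne (Ne.symm hr), zero_mul]
  · rw [Matrix.mul_single_apply_of_ne _ _ _ _ _ hs,
      Matrix.single_apply_of_col_ne _ _ (Ne.symm hs)]

/-- The quotient map. -/
def f : ↥(lastRowZero n F) →ₙ+* Matrix (Fin n) (Fin n) F where
  toFun := topLeft
  map_zero' := topLeft_zero
  map_add' := topLeft_add
  map_mul' := topLeft_mul

lemma jac_eq : jacobsonSet ↥(lastRowZero n F) = {x | topLeft x = 0} := by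
  ext a
  constructor
  · intro ha
    by_contra hA
    obtain ⟨p, q, hpq⟩ : ∃ p q, topLeft a p q ≠ 0 := by
      by_contra h
      push_neg at h
      exact hA (Matrix.ext fun p q => h p q)
    set A := topLeft a with hAdef
    set E : Matrix (Fin n) (Fin n) F := Matrix.single q p (A p q)⁻¹ with hE
    set M : Matrix (Fin n) (Fin n) F := E * A with hM
    have hMM : M * M = M := by
      have h1 : E * A * E = E := by
        rw [hE, tri, inv_mul_cancel₀ hpq, one_mul]
      calc M * M = (E * A * E) * A := by rw [hM, mul_assoc, mul_assoc, mul_assoc]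
        _ = M := by rw [h1, hM]
    have hMqq : M q q = 1 := by
      rw [hM, hE, Matrix.single_mul_apply_same, inv_mul_cancel₀ hpq]
    obtain ⟨b, hb⟩ := ha (mk E 0)
    have hb' := congrArg topLeft hb
    simp only [circOp, topLeft_sub, topLeft_add, topLeft_mul, topLeft_mk,
      topLeft_zero] at hb'
    rw [← hAdef, ← hM] at hb'
    have h2 := congrArg (fun X => X * M) hb'
    simp only [sub_mul, add_mul, zero_mul, mul_assoc, hMM] at h2
    have hM0 : M = 0 := by
      have : topLeft b * M + M - topLeft b * M = 0 := h2
      rwa [add_sub_cancel_left] at this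
    rw [hM0] at hMqq
    simp at hMqq
  · intro ha r
    simp only [Set.mem_setOf_eq] at ha
    refine ⟨-(r * a), ?_⟩
    have h0 : topLeft (r * a) = 0 := by rw [topLeft_mul, ha, mul_zero]
    have h1 : (r * a) * (r * a) = 0 := mul_eq_zero_of_topLeft _ _ h0
    simp only [circOp, neg_mul, h1, neg_zero, sub_neg_eq_add]
    simp

lemma ideal_eq (I : Set ↥(lastRowZero n F)) (hI : IsTwoSidedIdealSet I)
    (hu : I ≠ Set.univ) (h0 : I ≠ {0}) : I = {x | topLeft x = 0} := by
  obtain ⟨hz, hadd, hneg, hlm, hrm⟩ := hI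
  -- Step 1: I ⊆ ker topLeft
  have hsub : ∀ x ∈ I, topLeft x = 0 := by
    intro x hx
    by_contra hA
    apply hu
    obtain ⟨p, q, hpq⟩ : ∃ p q, topLeft x p q ≠ 0 := by
      by_contra h
      push_neg at h
      exact hA (Matrix.ext fun p q => h p q)
    set A := topLeft x with hAdef
    -- every basic element is in I
    have hbasic : ∀ (i j : Fin n) (c : F), mk (Matrix.single i j c) 0 ∈ I := by
      intro i j c
      have hmem : mk (Matrix.single i p (A p q)⁻¹) 0 * x * mk (Matrix.single q j c) 0 ∈ I :=
        hrm _ _ (hlm _ _ hx)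
      have heq : mk (Matrix.single i p (A p q)⁻¹) 0 * x * mk (Matrix.single q j c) 0
          = mk (Matrix.single i j c) 0 := by
        refine ext_tl _ _ ?_ ?_
        · rw [topLeft_mul, topLeft_mul, topLeft_mk, topLeft_mk, ← hAdef, tri,
            inv_mul_cancel₀ hpq, one_mul, topLeft_mk]
        · simp
      rwa [heq] at hmem
    have hBmem : ∀ B : Matrix (Fin n) (Fin n) F, mk B 0 ∈ I := by
      intro B
      induction B using Matrix.induction_on' with
      | h_zero => rw [mk_zero]; exact hz
      | h_add p q hp hq =>
        have : mk (p + q) (0 : Fin n → F) = mk p 0 + mk q 0 :=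
          ext_tl _ _ (by simp) (by simp)
        rw [this]; exact hadd _ hp _ hq
      | h_std_basis i j c => exact hbasic i j c
    have hJmem : ∀ u : Fin n → F, mk 0 u ∈ I := by
      intro u
      have hmem : mk (1 : Matrix (Fin n) (Fin n) F) 0 * mk 0 u ∈ I :=
        hrm _ _ (hBmem 1)
      have heq : mk (1 : Matrix (Fin n) (Fin n) F) 0 * mk 0 u = mk 0 u :=
        ext_tl _ _ (by simp) (by simp)
      rwa [heq] at hmem
    ext y
    simp only [Set.mem_univ, iff_true]
    have : y = mk (topLeft y) 0 + mk 0 (lastCol y) := by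
      refine ext_tl _ _ (by simp) (by simp)
    rw [this]
    exact hadd _ (hBmem _) _ (hJmem _)
  -- Step 2: ker topLeft ⊆ I
  obtain ⟨x, hxI, hxne⟩ : ∃ x ∈ I, x ≠ 0 := by
    by_contra h
    push_neg at h
    apply h0
    ext y
    simp only [Set.mem_singleton_iff]
    exact ⟨fun hy => by by_contra hne; exact hne (h y hy), fun hy => hy ▸ hz⟩
  have hxtl : topLeft x = 0 := hsub x hxI
  have hv : lastCol x ≠ 0 := by
    intro hv
    exact hxne (by rw [mk_eq x, hxtl, hv, mk_zero])
  obtain ⟨p, hp⟩ : ∃ p, lastCol x p ≠ 0 := by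
    by_contra h
    push_neg at h
    exact hv (funext h)
  have hJsub : ∀ u : Fin n → F, mk 0 u ∈ I := by
    intro u
    set B : Matrix (Fin n) (Fin n) F :=
      Matrix.of (fun i j => if j = p then u i * (lastCol x p)⁻¹ else 0) with hB
    have hmem : mk B 0 * x ∈ I := hlm _ _ hxI
    have heq : mk B 0 * x = mk 0 u := by
      refine ext_tl _ _ (by simp [hxtl]) ?_
      rw [lastCol_mul, topLeft_mk, lastCol_mk]
      ext i
      simp only [Matrix.mulVec, dotProduct, hB, Matrix.of_apply, ite_mul, zero_mul]
      rw [Finset.sum_ite_eq' Finset.univ p (fun j => u i * (lastCol x p)⁻¹ * lastCol x j)]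
      simp [inv_mul_cancel_right₀ hp]
    rwa [heq] at hmem
  ext y
  simp only [Set.mem_setOf_eq]
  constructor
  · exact hsub y
  · intro hy
    have : y = mk 0 (lastCol y) := ext_tl _ _ (by simp [hy]) (by simp)
    rw [this]
    exact hJsub _

end JacHelp

/-- For the ring `R` of `(n+1)×(n+1)` matrices over `F_q` with last row zero:
`J = {(0 | v) : v ∈ F_q^n}` is the Jacobson radical of `R`, it is the only
proper nonzero two-sided ideal of `R`, and `R/J ≅ M_n(F_q)`. -/
theorem jacobson_lastRowZero {F : Type*} [Field F] [Fintype F] {n : ℕ} (hn : 1 ≤ n) :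
    jacobsonSet ↥(lastRowZero n F) = {x | topLeft x = 0} ∧
    (∀ I : Set ↥(lastRowZero n F), IsTwoSidedIdealSet I →
      I ≠ Set.univ → I ≠ {0} → I = {x | topLeft x = 0}) ∧
    ∃ f : ↥(lastRowZero n F) →ₙ+* Matrix (Fin n) (Fin n) F,
      Function.Surjective f ∧ ∀ x, f x = 0 ↔ topLeft x = 0 := by
  refine ⟨JacHelp.jac_eq, JacHelp.ideal_eq, JacHelp.f, ?_, fun x => Iff.rfl⟩
  intro B
  exact ⟨JacHelp.mk B 0, JacHelp.topLeft_mk B 0⟩
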